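/- Let $T_1, T_2 < 0$ and $T_3 > 0$ with $\max\{-T_1, -T_2\} < T_3$. Then there exists a unique $p \in (\max\{-T_1, -T_2\}, T_3)$ such that $\frac{p}{p+T_1} + \frac{p}{p+T_2} + \frac{p}{p-T_3} = 1$. -/

import Mathlib

theorem stmt_9 (T1 T2 T3 : ℝ) (h1 : T1 < 0) (h2 : T2 < 0) (h3 : 0 < T3)
    (h : max (-T1) (-T2) < T3) :
    ∃! p : ℝ, p ∈ Set.Ioo (max (-T1) (-T2)) T3 ∧
      p / (p + T1) + p / (p + T2) + p / (p - T3) = 1 := by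
  set m := max (-T1) (-T2) with hm
  clear_value m
  have hT1m : -T1 ≤ m := hm ▸ le_max_left _ _
  have hT2m : -T2 ≤ m := hm ▸ le_max_right _ _
  have hm0 : 0 < m := lt_of_lt_of_le (by linarith) hT1m
  have hmT3 : m < T3 := h
  set f : ℝ → ℝ := fun p => p / (p + T1) + p / (p + T2) + p / (p - T3) with hf
  clear_value f
  -- strict antitonicity on the interval
  have hanti : ∀ x ∈ Set.Ioo m T3, ∀ y ∈ Set.Ioo m T3, x < y → f y < f x := by
    rintro x ⟨hx1, hx2⟩ y ⟨hy1, hy2⟩ hxy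
    have dx1 : 0 < x + T1 := by linarith
    have dx2 : 0 < x + T2 := by linarith
    have dy1 : 0 < y + T1 := by linarith
    have dy2 : 0 < y + T2 := by linarith
    have dx3 : 0 < T3 - x := by linarith
    have dy3 : 0 < T3 - y := by linarith
    have e1 : y / (y + T1) < x / (x + T1) := by
      rw [div_lt_div_iff₀ dy1 dx1]; nlinarith
    have e2 : y / (y + T2) < x / (x + T2) := by
      rw [div_lt_div_iff₀ dy2 dx2]; nlinarith
    have e3 : y / (y - T3) < x / (x - T3) := by
      rw [show x - T3 = -(T3 - x) by ring, show y - T3 = -(T3 - y) by ring,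
        div_neg, div_neg, neg_lt_neg_iff, div_lt_div_iff₀ dx3 dy3]
      nlinarith
    simp only [hf]
    linarith
  -- the left test point
  set a := (3 * m + T3) / 4 with ha
  clear_value a
  have ham : m < a := by rw [ha]; linarith
  have haT3 : a < T3 := by rw [ha]; linarith
  have ha0 : 0 < a := lt_trans hm0 ham
  -- the right test point
  set C := 1 + 4 * (m / (T3 - m)) with hC
  clear_value C
  have hDpos : 0 < m / (T3 - m) := div_pos hm0 (by linarith)
  have hC1 : 1 < C := by rw [hC]; linarith
  have hCpos : (0:ℝ) < 2 * C := by linarith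
  set b := max ((m + T3) / 2) (T3 - m / (2 * C)) with hb
  clear_value b
  have hb1 : (m + T3) / 2 ≤ b := by rw [hb]; exact le_max_left _ _
  have hb2 : T3 - m / (2 * C) ≤ b := by rw [hb]; exact le_max_right _ _
  have hbT3 : b < T3 := by
    rw [hb]
    apply max_lt (by linarith)
    have : 0 < m / (2 * C) := div_pos hm0 hCpos
    linarith
  have hbm : m < b := by linarith
  have hab : a < b := by
    have : a < (m + T3) / 2 := by rw [ha]; linarith
    linarith
  -- f a > 1
  have hfa : 1 < f a := by
    have dT3 : 0 < T3 - a := by linarith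
    have dam : 0 < a - m := by linarith
    have t3 : a / (T3 - a) < a / (a - m) := by
      rw [div_lt_div_iff₀ dT3 dam]
      nlinarith [ha]
    have eneg : a / (a - T3) = -(a / (T3 - a)) := by
      rw [show a - T3 = -(T3 - a) by ring, div_neg]
    rcases max_choice (-T1) (-T2) with hc | hc
    · have hcm : T1 = -m := by have h9 := hm.trans hc; linarith
      have t1 : a / (a + T1) = a / (a - m) := by rw [show a + T1 = a - m by rw [hcm]; ring]
      have t2 : 1 ≤ a / (a + T2) := by
        rw [one_le_div (by linarith : (0:ℝ) < a + T2)]; linarith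
      simp only [hf]
      rw [t1, eneg]
      linarith
    · have hcm : T2 = -m := by have h9 := hm.trans hc; linarith
      have t2 : a / (a + T2) = a / (a - m) := by rw [show a + T2 = a - m by rw [hcm]; ring]
      have t1 : 1 ≤ a / (a + T1) := by
        rw [one_le_div (by linarith : (0:ℝ) < a + T1)]; linarith
      simp only [hf]
      rw [t2, eneg]
      linarith
  -- f b < 1
  have hfb : f b < 1 := by
    have dbm : 0 < b - m := by linarith
    have dTb : 0 < T3 - b := by linarith
    have hb0 : 0 < b := lt_trans hm0 hbm
    have key1 : b / (b + T1) ≤ b / (b - m) := by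
      apply div_le_div_of_nonneg_left (le_of_lt hb0) dbm
      linarith
    have key2 : b / (b + T2) ≤ b / (b - m) := by
      apply div_le_div_of_nonneg_left (le_of_lt hb0) dbm
      linarith
    have key3 : b / (b - m) ≤ 1 + 2 * (m / (T3 - m)) := by
      have e : b / (b - m) = 1 + m / (b - m) := by
        field_simp
        ring
      rw [e]
      have : m / (b - m) ≤ 2 * (m / (T3 - m)) := by
        rw [show 2 * (m / (T3 - m)) = (2 * m) / (T3 - m) by ring,
          div_le_div_iff₀ dbm (by linarith : (0:ℝ) < T3 - m)]
        nlinarith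
      linarith
    have key4 : 2 * C ≤ b / (T3 - b) := by
      have s1 : 2 * C ≤ m / (T3 - b) := by
        rw [le_div_iff₀ dTb]
        have hTbb : T3 - b ≤ m / (2 * C) := by linarith
        have h5 := mul_le_mul_of_nonneg_left hTbb (le_of_lt hCpos)
        have e2 : 2 * C * (m / (2 * C)) = m := by
          rw [mul_comm]; exact div_mul_cancel₀ m (ne_of_gt hCpos)
        exact h5.trans (le_of_eq e2)
      have s2 : m / (T3 - b) ≤ b / (T3 - b) := by
        gcongr
      linarith
    have eneg : b / (b - T3) = -(b / (T3 - b)) := by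
      rw [show b - T3 = -(T3 - b) by ring, div_neg]
    simp only [hf]
    rw [eneg]
    rw [hC] at key4
    linarith
  -- continuity on [a, b]
  have hcont : ContinuousOn f (Set.Icc a b) := by
    have c1 : ∀ p ∈ Set.Icc a b, p + T1 ≠ 0 := by
      rintro p ⟨hp1, hp2⟩
      have hx : 0 < p + T1 := by linarith only [hp1, ham, hT1m]
      exact ne_of_gt hx
    have c2 : ∀ p ∈ Set.Icc a b, p + T2 ≠ 0 := by
      rintro p ⟨hp1, hp2⟩
      have hx : 0 < p + T2 := by linarith only [hp1, ham, hT2m]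
      exact ne_of_gt hx
    have c3 : ∀ p ∈ Set.Icc a b, p - T3 ≠ 0 := by
      rintro p ⟨hp1, hp2⟩
      have hx : p - T3 < 0 := by linarith only [hp2, hbT3]
      exact ne_of_lt hx
    rw [hf]
    refine ContinuousOn.add (ContinuousOn.add ?_ ?_) ?_
    · exact ContinuousOn.div continuous_id.continuousOn
        ((continuous_id.add continuous_const).continuousOn) c1
    · exact ContinuousOn.div continuous_id.continuousOn
        ((continuous_id.add continuous_const).continuousOn) c2
    · exact ContinuousOn.div continuous_id.continuousOn
        ((continuous_id.sub continuous_const).continuousOn) c3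
  -- IVT
  have hIVT : Set.Icc (f b) (f a) ⊆ f '' Set.Icc a b :=
    intermediate_value_Icc' (le_of_lt hab) hcont
  obtain ⟨c, hcmem, hfc⟩ := hIVT ⟨le_of_lt hfb, le_of_lt hfa⟩
  have hfc' : c / (c + T1) + c / (c + T2) + c / (c - T3) = 1 := by
    rw [hf] at hfc; exact hfc
  have hcIoo : c ∈ Set.Ioo m T3 := ⟨lt_of_lt_of_le ham hcmem.1, lt_of_le_of_lt hcmem.2 hbT3⟩
  refine ⟨c, ⟨hcIoo, hfc'⟩, ?_⟩
  rintro y ⟨hy, hfy⟩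
  rcases lt_trichotomy y c with hlt | heq | hgt
  · have hx := hanti y hy c hcIoo hlt
    simp only [hf] at hx
    rw [hfc', hfy] at hx
    exact absurd hx (lt_irrefl 1)
  · exact heq
  · have hx := hanti c hcIoo y hy hgt
    simp only [hf] at hx
    rw [hfc', hfy] at hx
    exact absurd hx (lt_irrefl 1)
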